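/- Let H and K be complex Hilbert spaces, X a finite set, and (v_{a,x})_{a,x ∈ X} a family of bounded operators from H to K satisfying Σ_{a∈X} v_{a,x}* v_{a,x'} = δ_{x,x'} 1_H for all x, x' ∈ X (that is, the block operator matrix (v_{a,x})_{a,x}, regarded as an operator from the direct sum H^X to K^X, is an isometry). Then there exist a complex Hilbert space L, isometries w₁ : H → L and w₂ : K → L, and a family (U_{a,x})_{a,x∈X} of bounded operators on L such that the block operator matrix (U_{a,x})_{a,x} is a unitary operator on L^X, and for all a, x ∈ X: v_{a,x} = w₂* U_{a,x} w₁ and w₂ w₂* U_{a,x} w₁ = U_{a,x} w₁. -/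

import Mathlib

set_option linter.unusedSectionVars false
set_option linter.unnecessarySimpa false
set_option maxHeartbeats 1000000

universe u

open ContinuousLinearMap

namespace Stmt16Aux
universe v

section helpers

variable {R : Type*} [Semiring R]
variable {M₀ M₁ M₂ M₃ M₄ M₅ M₆ : Type*}
  [TopologicalSpace M₀] [AddCommMonoid M₀] [Module R M₀]
  [TopologicalSpace M₁] [AddCommMonoid M₁] [Module R M₁]
  [TopologicalSpace M₂] [AddCommMonoid M₂] [Module R M₂]
  [TopologicalSpace M₃] [AddCommMonoid M₃] [Module R M₃]
  [TopologicalSpace M₄] [AddCommMonoid M₄] [Module R M₄]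
  [TopologicalSpace M₅] [AddCommMonoid M₅] [Module R M₅]
  [TopologicalSpace M₆] [AddCommMonoid M₆] [Module R M₆]

lemma compmix (W' : M₅ →L[R] M₆) (A : M₄ →L[R] M₅) (P' : M₃ →L[R] M₄)
    (W : M₂ →L[R] M₃) (B : M₁ →L[R] M₂) (P : M₀ →L[R] M₁) :
    (W' ∘L A ∘L P') ∘L (W ∘L B ∘L P) = W' ∘L (A ∘L (P' ∘L W) ∘L B) ∘L P := by
  simp only [ContinuousLinearMap.comp_assoc]

lemma one_comp' (B : M₁ →L[R] M₂) : (1 : M₂ →L[R] M₂) ∘L B = B := by ext; rfl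
lemma comp_one' (B : M₁ →L[R] M₂) : B ∘L (1 : M₁ →L[R] M₁) = B := by ext; rfl

lemma ite_comp (c : Prop) [Decidable c] (f g : M₂ →L[R] M₃) (h : M₁ →L[R] M₂) :
    (if c then f else g) ∘L h = if c then f ∘L h else g ∘L h := by split_ifs <;> rfl

lemma comp_ite (c : Prop) [Decidable c] (f : M₂ →L[R] M₃) (g h : M₁ →L[R] M₂) :
    f ∘L (if c then g else h) = if c then f ∘L g else f ∘L h := by split_ifs <;> rfl

end helpers

variable {E : Type v} [NormedAddCommGroup E] [InnerProductSpace ℂ E] [CompleteSpace E]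

lemma adj_one : ContinuousLinearMap.adjoint (1 : E →L[ℂ] E) = 1 := by
  rw [ContinuousLinearMap.one_def, ContinuousLinearMap.adjoint_id]

variable {H K : Type u}
    [NormedAddCommGroup H] [InnerProductSpace ℂ H] [CompleteSpace H]
    [NormedAddCommGroup K] [InnerProductSpace ℂ K] [CompleteSpace K]

noncomputable def w1 : H →L[ℂ] WithLp 2 (H × K) :=
  ((WithLp.prodContinuousLinearEquiv 2 ℂ H K).symm : (H × K) →L[ℂ] WithLp 2 (H × K)) ∘L
    ContinuousLinearMap.inl ℂ H K

noncomputable def w2 : K →L[ℂ] WithLp 2 (H × K) :=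
  ((WithLp.prodContinuousLinearEquiv 2 ℂ H K).symm : (H × K) →L[ℂ] WithLp 2 (H × K)) ∘L
    ContinuousLinearMap.inr ℂ H K

noncomputable def p1 : WithLp 2 (H × K) →L[ℂ] H :=
  ContinuousLinearMap.fst ℂ H K ∘L
    ((WithLp.prodContinuousLinearEquiv 2 ℂ H K) : WithLp 2 (H × K) →L[ℂ] (H × K))

noncomputable def p2 : WithLp 2 (H × K) →L[ℂ] K :=
  ContinuousLinearMap.snd ℂ H K ∘L
    ((WithLp.prodContinuousLinearEquiv 2 ℂ H K) : WithLp 2 (H × K) →L[ℂ] (H × K))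

@[simp] lemma w1_apply (h : H) : (w1 (K := K) h) = (WithLp.equiv 2 (H × K)).symm (h, 0) := rfl
@[simp] lemma w2_apply (k : K) : (w2 (H := H) k) = (WithLp.equiv 2 (H × K)).symm (0, k) := rfl
@[simp] lemma p1_apply (l : WithLp 2 (H × K)) : p1 l = l.fst := rfl
@[simp] lemma p2_apply (l : WithLp 2 (H × K)) : p2 l = l.snd := rfl

lemma p1w1 : (p1 : WithLp 2 (H × K) →L[ℂ] H) ∘L w1 = 1 := by ext h; rfl
lemma p2w2 : (p2 : WithLp 2 (H × K) →L[ℂ] K) ∘L w2 = 1 := by ext k; rfl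
lemma p1w2 : (p1 ∘L w2 : K →L[ℂ] H) = 0 := by ext k; rfl
lemma p2w1 : (p2 ∘L w1 : H →L[ℂ] K) = 0 := by ext h; rfl

lemma wp_sum : (w1 ∘L p1 + w2 ∘L p2 : WithLp 2 (H × K) →L[ℂ] WithLp 2 (H × K)) = 1 := by
  ext l
  exact congrArg (WithLp.equiv 2 (H × K)).symm (Prod.ext (by simp) (by simp))

lemma adj_w1 : ContinuousLinearMap.adjoint (w1 : H →L[ℂ] WithLp 2 (H × K)) = p1 := by
  symm
  rw [ContinuousLinearMap.eq_adjoint_iff]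
  intro x y
  simp [WithLp.prod_inner_apply]

lemma adj_w2 : ContinuousLinearMap.adjoint (w2 : K →L[ℂ] WithLp 2 (H × K)) = p2 := by
  symm
  rw [ContinuousLinearMap.eq_adjoint_iff]
  intro x y
  simp [WithLp.prod_inner_apply]

lemma adj_p1 : ContinuousLinearMap.adjoint (p1 : WithLp 2 (H × K) →L[ℂ] H) = w1 := by
  rw [← adj_w1, ContinuousLinearMap.adjoint_adjoint]

lemma adj_p2 : ContinuousLinearMap.adjoint (p2 : WithLp 2 (H × K) →L[ℂ] K) = w2 := by
  rw [← adj_w2, ContinuousLinearMap.adjoint_adjoint]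

lemma norm_w1 (h : H) : ‖w1 (K := K) h‖ = ‖h‖ := by
  have h2 : ‖w1 (K := K) h‖ ^ 2 = ‖h‖ ^ 2 := by
    simpa using WithLp.prod_norm_sq_eq_of_L2 (w1 (K := K) h)
  rw [← Real.sqrt_sq (norm_nonneg (w1 (K := K) h)), h2, Real.sqrt_sq (norm_nonneg h)]

lemma norm_w2 (k : K) : ‖w2 (H := H) k‖ = ‖k‖ := by
  have h2 : ‖w2 (H := H) k‖ ^ 2 = ‖k‖ ^ 2 := by
    simpa using WithLp.prod_norm_sq_eq_of_L2 (w2 (H := H) k)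
  rw [← Real.sqrt_sq (norm_nonneg (w2 (H := H) k)), h2, Real.sqrt_sq (norm_nonneg k)]



variable {X : Type} [Fintype X] [DecidableEq X] (v : X → X → H →L[ℂ] K)

/-- entries of `V V*`. -/
noncomputable def P (a c : X) : K →L[ℂ] K :=
  ∑ b : X, v a b ∘L ContinuousLinearMap.adjoint (v c b)

/-- entries of `1 - V V*`. -/
noncomputable def D (a c : X) : K →L[ℂ] K :=
  (if a = c then (1 : K →L[ℂ] K) else 0) - P v a c

lemma adj_P (a c : X) : ContinuousLinearMap.adjoint (P v a c) = P v c a := by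
  unfold P
  rw [map_sum]
  exact Finset.sum_congr rfl fun b _ => by
    rw [ContinuousLinearMap.adjoint_comp, ContinuousLinearMap.adjoint_adjoint]

lemma adj_D (a c : X) : ContinuousLinearMap.adjoint (D v a c) = D v c a := by
  unfold D
  rw [map_sub, adj_P, apply_ite ContinuousLinearMap.adjoint, adj_one, map_zero]
  congr 1
  simp [eq_comm]

variable (hv : ∀ x x' : X, ∑ a : X, ContinuousLinearMap.adjoint (v a x) ∘L v a x'
    = if x = x' then (1 : H →L[ℂ] H) else 0)

include hv

lemma PV (x x' : X) : ∑ a : X, P v x a ∘L v a x' = v x x' := by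
  calc ∑ a : X, P v x a ∘L v a x'
      = ∑ a : X, ∑ b : X, v x b ∘L (ContinuousLinearMap.adjoint (v a b) ∘L v a x') := by
        simp only [P, finset_sum_comp, ContinuousLinearMap.comp_assoc]
    _ = ∑ b : X, v x b ∘L (∑ a : X, ContinuousLinearMap.adjoint (v a b) ∘L v a x') := by
        rw [Finset.sum_comm]
        exact Finset.sum_congr rfl fun b _ => (comp_finset_sum _ _).symm
    _ = v x x' := by
        simp only [hv, comp_ite, comp_one', comp_zero]
        simp

lemma DV (x x' : X) : ∑ a : X, D v x a ∘L v a x' = 0 := by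
  simp only [D, sub_comp, Finset.sum_sub_distrib, PV v hv, ite_comp, one_comp', zero_comp]
  simp

lemma VstarP (x x' : X) :
    ∑ a : X, ContinuousLinearMap.adjoint (v a x) ∘L P v a x'
      = ContinuousLinearMap.adjoint (v x' x) := by
  calc ∑ a : X, ContinuousLinearMap.adjoint (v a x) ∘L P v a x'
      = ∑ a : X, ∑ b : X, (ContinuousLinearMap.adjoint (v a x) ∘L v a b) ∘L
          ContinuousLinearMap.adjoint (v x' b) := by
        simp only [P, comp_finset_sum, ContinuousLinearMap.comp_assoc]
    _ = ∑ b : X, (∑ a : X, ContinuousLinearMap.adjoint (v a x) ∘L v a b) ∘L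
          ContinuousLinearMap.adjoint (v x' b) := by
        rw [Finset.sum_comm]
        exact Finset.sum_congr rfl fun b _ => (finset_sum_comp _ _).symm
    _ = ContinuousLinearMap.adjoint (v x' x) := by
        simp only [hv, ite_comp, one_comp', zero_comp]
        simp

lemma VstarD (x x' : X) :
    ∑ a : X, ContinuousLinearMap.adjoint (v a x) ∘L D v a x' = 0 := by
  simp only [D, comp_sub, Finset.sum_sub_distrib, VstarP v hv, comp_ite, comp_one', comp_zero]
  simp

lemma PP (x x' : X) : ∑ a : X, P v x a ∘L P v a x' = P v x x' := by
  calc ∑ a : X, P v x a ∘L P v a x'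
      = ∑ a : X, ∑ b : X, v x b ∘L (ContinuousLinearMap.adjoint (v a b) ∘L P v a x') := by
        refine Finset.sum_congr rfl fun a _ => ?_
        rw [P, finset_sum_comp]
        exact Finset.sum_congr rfl fun b _ => by rw [ContinuousLinearMap.comp_assoc]
    _ = ∑ b : X, v x b ∘L (∑ a : X, ContinuousLinearMap.adjoint (v a b) ∘L P v a x') := by
        rw [Finset.sum_comm]
        exact Finset.sum_congr rfl fun b _ => (comp_finset_sum _ _).symm
    _ = P v x x' := by
        simp only [VstarP v hv]
        rfl

lemma DD (x x' : X) : ∑ a : X, D v x a ∘L D v a x' = D v x x' := by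
  have expand : ∀ a : X, D v x a ∘L D v a x'
      = ((if x = a then (1 : K →L[ℂ] K) else 0) ∘L D v a x') - P v x a ∘L D v a x' := by
    intro a; rw [D, sub_comp]
  rw [Finset.sum_congr rfl fun a _ => expand a, Finset.sum_sub_distrib]
  have h1 : ∑ a : X, (if x = a then (1 : K →L[ℂ] K) else 0) ∘L D v a x' = D v x x' := by
    simp only [ite_comp, one_comp', zero_comp]
    simp
  have h2 : ∑ a : X, P v x a ∘L D v a x' = 0 := by
    have expand2 : ∀ a : X, P v x a ∘L D v a x'
        = (P v x a ∘L (if a = x' then (1 : K →L[ℂ] K) else 0)) - P v x a ∘L P v a x' := by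
      intro a; rw [D, comp_sub]
    rw [Finset.sum_congr rfl fun a _ => expand2 a, Finset.sum_sub_distrib, PP v hv]
    simp only [comp_ite, comp_one', comp_zero]
    simp
  rw [h1, h2, sub_zero]

omit hv

/-- the putative unitary entries. -/
noncomputable def Uop (a x : X) : WithLp 2 (H × K) →L[ℂ] WithLp 2 (H × K) :=
  w1 ∘L ContinuousLinearMap.adjoint (v x a) ∘L p2 + w2 ∘L v a x ∘L p1 + w2 ∘L D v a x ∘L p2

lemma adj_U (a x : X) : ContinuousLinearMap.adjoint (Uop v a x)
    = w2 ∘L v x a ∘L p1 + w1 ∘L ContinuousLinearMap.adjoint (v a x) ∘L p2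
      + w2 ∘L D v x a ∘L p2 := by
  unfold Uop
  rw [map_add, map_add]
  simp only [ContinuousLinearMap.adjoint_comp, ContinuousLinearMap.adjoint_adjoint,
    adj_w1, adj_w2, adj_p1, adj_p2, adj_D, ContinuousLinearMap.comp_assoc]

include hv

lemma key1 (x x' : X) :
    ∑ a : X, ContinuousLinearMap.adjoint (Uop v a x) ∘L Uop v a x'
      = if x = x' then (1 : WithLp 2 (H × K) →L[ℂ] WithLp 2 (H × K)) else 0 := by
  have expand : ∀ a : X, ContinuousLinearMap.adjoint (Uop v a x) ∘L Uop v a x'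
      = w1 ∘L (ContinuousLinearMap.adjoint (v a x) ∘L v a x') ∘L p1
        + w1 ∘L (ContinuousLinearMap.adjoint (v a x) ∘L D v a x') ∘L p2
        + w2 ∘L (v x a ∘L ContinuousLinearMap.adjoint (v x' a)) ∘L p2
        + w2 ∘L (D v x a ∘L v a x') ∘L p1
        + w2 ∘L (D v x a ∘L D v a x') ∘L p2 := by
    intro a
    rw [adj_U]
    unfold Uop
    simp only [add_comp, comp_add, compmix, p1w1, p1w2, p2w1, p2w2, one_comp', comp_one',
      ContinuousLinearMap.zero_comp, ContinuousLinearMap.comp_zero, add_zero, zero_add]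
    abel
  rw [Finset.sum_congr rfl fun a _ => expand a]
  simp only [Finset.sum_add_distrib]
  rw [← comp_finset_sum, ← comp_finset_sum, ← comp_finset_sum, ← comp_finset_sum,
    ← comp_finset_sum, ← finset_sum_comp, ← finset_sum_comp, ← finset_sum_comp,
    ← finset_sum_comp, ← finset_sum_comp]
  rw [hv x x', VstarD v hv x x', DV v hv x x', DD v hv x x']
  simp only [ContinuousLinearMap.comp_zero, ContinuousLinearMap.zero_comp, add_zero, zero_add]
  rw [show (∑ a : X, v x a ∘L ContinuousLinearMap.adjoint (v x' a)) = P v x x' from rfl]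
  rw [show w1 ∘L (if x = x' then (1 : H →L[ℂ] H) else 0) ∘L p1 + w2 ∘L P v x x' ∘L p2
        + w2 ∘L D v x x' ∘L p2
      = w1 ∘L (if x = x' then (1 : H →L[ℂ] H) else 0) ∘L p1
        + w2 ∘L (P v x x' + D v x x') ∘L p2 by
    simp only [ContinuousLinearMap.comp_assoc, add_comp, comp_add]; abel]
  rw [show P v x x' + D v x x' = if x = x' then (1 : K →L[ℂ] K) else 0 by rw [D]; abel]
  split_ifs with h
  · simp only [one_comp']; exact wp_sum
  · simp

lemma key2 (a a' : X) :
    ∑ x : X, Uop v a x ∘L ContinuousLinearMap.adjoint (Uop v a' x)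
      = if a = a' then (1 : WithLp 2 (H × K) →L[ℂ] WithLp 2 (H × K)) else 0 := by
  have expand : ∀ x : X, Uop v a x ∘L ContinuousLinearMap.adjoint (Uop v a' x)
      = w1 ∘L (ContinuousLinearMap.adjoint (v x a) ∘L v x a') ∘L p1
        + w1 ∘L (ContinuousLinearMap.adjoint (v x a) ∘L D v x a') ∘L p2
        + w2 ∘L (v a x ∘L ContinuousLinearMap.adjoint (v a' x)) ∘L p2
        + w2 ∘L (D v a x ∘L v x a') ∘L p1
        + w2 ∘L (D v a x ∘L D v x a') ∘L p2 := by
    intro x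
    rw [adj_U]
    unfold Uop
    simp only [add_comp, comp_add, compmix, p1w1, p1w2, p2w1, p2w2, one_comp', comp_one',
      ContinuousLinearMap.zero_comp, ContinuousLinearMap.comp_zero, add_zero, zero_add]
    abel
  rw [Finset.sum_congr rfl fun x _ => expand x]
  simp only [Finset.sum_add_distrib]
  rw [← comp_finset_sum, ← comp_finset_sum, ← comp_finset_sum, ← comp_finset_sum,
    ← comp_finset_sum, ← finset_sum_comp, ← finset_sum_comp, ← finset_sum_comp,
    ← finset_sum_comp, ← finset_sum_comp]
  rw [hv a a', VstarD v hv a a', DV v hv a a', DD v hv a a']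
  simp only [ContinuousLinearMap.comp_zero, ContinuousLinearMap.zero_comp, add_zero, zero_add]
  rw [show (∑ x : X, v a x ∘L ContinuousLinearMap.adjoint (v a' x)) = P v a a' from rfl]
  rw [show w1 ∘L (if a = a' then (1 : H →L[ℂ] H) else 0) ∘L p1 + w2 ∘L P v a a' ∘L p2
        + w2 ∘L D v a a' ∘L p2
      = w1 ∘L (if a = a' then (1 : H →L[ℂ] H) else 0) ∘L p1
        + w2 ∘L (P v a a' + D v a a') ∘L p2 by
    simp only [ContinuousLinearMap.comp_assoc, add_comp, comp_add]; abel]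
  rw [show P v a a' + D v a a' = if a = a' then (1 : K →L[ℂ] K) else 0 by rw [D]; abel]
  split_ifs with h
  · simp only [one_comp']; exact wp_sum
  · simp

omit hv

lemma Uw1 (a x : X) : Uop v a x ∘L w1 = w2 ∘L v a x := by
  unfold Uop
  simp only [add_comp, ContinuousLinearMap.comp_assoc, p1w1, p2w1, comp_one',
    ContinuousLinearMap.comp_zero, ContinuousLinearMap.zero_comp, add_zero, zero_add]

end Stmt16Aux

/-- Every block operator isometry `(v_{a,x})_{a,x∈X}` between complex Hilbert spaces `H`
and `K` dilates to a block operator unitary: there are a Hilbert space `L`, isometries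
`w₁ : H → L`, `w₂ : K → L` and a family `(U_{a,x})` whose block operator matrix is unitary
(expressed by the relations `Σ_a U_{a,x}* U_{a,x'} = δ_{x,x'} 1` and
`Σ_x U_{a,x} U_{a',x}* = δ_{a,a'} 1`) with `v_{a,x} = w₂* U_{a,x} w₁` and
`w₂ w₂* U_{a,x} w₁ = U_{a,x} w₁` for all `a, x ∈ X`. -/
theorem stmt_16 {H K : Type u}
    [NormedAddCommGroup H] [InnerProductSpace ℂ H] [CompleteSpace H]
    [NormedAddCommGroup K] [InnerProductSpace ℂ K] [CompleteSpace K]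
    (X : Type) [Fintype X] [DecidableEq X]
    (v : X → X → H →L[ℂ] K)
    (hv : ∀ x x' : X, ∑ a : X, ContinuousLinearMap.adjoint (v a x) ∘L v a x'
        = if x = x' then (1 : H →L[ℂ] H) else 0) :
    ∃ (L : Type u) (_ : NormedAddCommGroup L) (_ : InnerProductSpace ℂ L)
      (_ : CompleteSpace L) (w₁ : H →L[ℂ] L) (w₂ : K →L[ℂ] L) (U : X → X → L →L[ℂ] L),
      (∀ h : H, ‖w₁ h‖ = ‖h‖) ∧ (∀ k : K, ‖w₂ k‖ = ‖k‖) ∧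
      (∀ x x' : X, ∑ a : X, ContinuousLinearMap.adjoint (U a x) ∘L U a x'
          = if x = x' then (1 : L →L[ℂ] L) else 0) ∧
      (∀ a a' : X, ∑ x : X, U a x ∘L ContinuousLinearMap.adjoint (U a' x)
          = if a = a' then (1 : L →L[ℂ] L) else 0) ∧
      (∀ a x : X, v a x = ContinuousLinearMap.adjoint w₂ ∘L U a x ∘L w₁) ∧
      (∀ a x : X, w₂ ∘L ContinuousLinearMap.adjoint w₂ ∘L U a x ∘L w₁ = U a x ∘L w₁) := by
  have hcancel : ∀ a x : X,
      Stmt16Aux.p2 (H := H) (K := K) ∘L (Stmt16Aux.w2 ∘L v a x) = v a x := by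
    intro a x
    rw [← ContinuousLinearMap.comp_assoc, Stmt16Aux.p2w2, Stmt16Aux.one_comp']
  refine ⟨WithLp 2 (H × K), inferInstance, inferInstance, inferInstance,
    Stmt16Aux.w1, Stmt16Aux.w2, fun a x => Stmt16Aux.Uop v a x,
    fun h => Stmt16Aux.norm_w1 h, fun k => Stmt16Aux.norm_w2 k,
    fun x x' => Stmt16Aux.key1 v hv x x', fun a a' => Stmt16Aux.key2 v hv a a', ?_, ?_⟩
  · intro a x
    rw [Stmt16Aux.adj_w2, Stmt16Aux.Uw1, hcancel]
  · intro a x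
    rw [Stmt16Aux.adj_w2, Stmt16Aux.Uw1, hcancel]
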